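/- Let (X,d) be a metric space and γ : T → X a weakly-geodesic ray. Then for every y ∈ X the limit lim_{t→∞, t∈T} (d(γ(t),y) − t) exists in ℝ; consequently, for every pair y, z ∈ X the limit lim_{t→∞, t∈T} (d(γ(t),y) − d(γ(t),z)) exists in ℝ. -/

import Mathlib

open Filter Topology

/-- `T` is a valid domain for a ray: an unbounded subset of `[0,∞)` containing `0`. -/
def IsRayDomain (T : Set ℝ) : Prop :=
  T ⊆ Set.Ici (0 : ℝ) ∧ 0 ∈ T ∧ ∀ M : ℝ, ∃ t ∈ T, M < t

/-- A weakly-geodesic ray for the distance function `d`. -/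
def WeaklyGeodesicRay {X : Type*} (d : X → X → ℝ) (T : Set ℝ) (γ : ℝ → X) : Prop :=
  ∀ y : X, ∀ ε : ℝ, 0 < ε → ∃ N : ℝ, ∀ s ∈ T, ∀ t ∈ T, N ≤ s → N ≤ t →
    |d (γ t) (γ 0) - t| < ε ∧ |d (γ t) y - d (γ s) y - (t - s)| < ε

/-- An almost-geodesic ray for the distance function `d`. -/
def AlmostGeodesicRay {X : Type*} (d : X → X → ℝ) (T : Set ℝ) (γ : ℝ → X) : Prop :=
  ∀ ε : ℝ, 0 < ε → ∃ N : ℝ, ∀ s ∈ T, ∀ t ∈ T, N ≤ s → s ≤ t →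
    |d (γ t) (γ s) + d (γ s) (γ 0) - t| < ε

/-- A geodesic ray for the distance function `d`. -/
def GeodesicRay {X : Type*} (d : X → X → ℝ) (T : Set ℝ) (γ : ℝ → X) : Prop :=
  ∀ s ∈ T, ∀ t ∈ T, d (γ s) (γ t) = |s - t|

/-- `L` is the limit of `d(γ(t),y) - d(γ(t),z)` as `t → ∞` along `T`. -/
def RayLimit {X : Type*} (d : X → X → ℝ) (T : Set ℝ) (γ : ℝ → X) (y z : X) (L : ℝ) : Prop :=
  Tendsto (fun t => d (γ t) y - d (γ t) z) (atTop ⊓ 𝓟 T) (𝓝 L)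

/-- For a weakly-geodesic ray `γ : T → X` in a metric space, the limit
`lim_{t→∞, t∈T} (d(γ(t),y) − t)` exists for every `y`, and consequently the limit
`lim_{t→∞, t∈T} (d(γ(t),y) − d(γ(t),z))` exists for every pair `y, z`. -/
theorem stmt0 {X : Type*} [MetricSpace X] (T : Set ℝ) (γ : ℝ → X)
    (hT : IsRayDomain T)
    (hγ : WeaklyGeodesicRay (fun x y => dist x y) T γ) :
    (∀ y : X, ∃ L : ℝ, Tendsto (fun t => dist (γ t) y - t) (atTop ⊓ 𝓟 T) (𝓝 L)) ∧
    (∀ y z : X, ∃ L : ℝ, RayLimit (fun x y => dist x y) T γ y z L) := by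
  have hne : (atTop ⊓ 𝓟 T).NeBot := by
    rw [Filter.inf_principal_neBot_iff]
    intro U hU
    obtain ⟨M, hM⟩ := Filter.mem_atTop_sets.mp hU
    obtain ⟨t, htT, htM⟩ := hT.2.2 M
    exact ⟨t, hM t htM.le, htT⟩
  have key : ∀ y : X, ∃ L : ℝ,
      Tendsto (fun t => dist (γ t) y - t) (atTop ⊓ 𝓟 T) (𝓝 L) := by
    intro y
    set f : ℝ → ℝ := fun t => dist (γ t) y - t with hf
    have hc : Cauchy (Filter.map f (atTop ⊓ 𝓟 T)) := by
      rw [Metric.cauchy_iff]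
      refine ⟨Filter.map_neBot, fun ε hε => ?_⟩
      obtain ⟨N, hN⟩ := hγ y ε hε
      refine ⟨f '' (Set.Ici N ∩ T), ?_, ?_⟩
      · exact Filter.image_mem_map
          (Filter.inter_mem_inf (Filter.Ici_mem_atTop N) (Filter.mem_principal_self T))
      · rintro _ ⟨s, ⟨hs1, hs2⟩, rfl⟩ _ ⟨t, ⟨ht1, ht2⟩, rfl⟩
        have h2 := (hN t ht2 s hs2 ht1 hs1).2
        rw [Real.dist_eq]
        simp only [hf]
        have : dist (γ s) y - s - (dist (γ t) y - t) = dist (γ s) y - dist (γ t) y - (s - t) := by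
          ring
        rw [this]
        exact h2
    exact CompleteSpace.complete hc
  refine ⟨key, fun y z => ?_⟩
  obtain ⟨Ly, hLy⟩ := key y
  obtain ⟨Lz, hLz⟩ := key z
  refine ⟨Ly - Lz, ?_⟩
  have := hLy.sub hLz
  simpa [RayLimit] using this
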